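/- For the quiver of the local Calabi–Yau threefold over dP1 with vertices 1,2,3,4, arrows a: 1→2, b: 1→3, c_1,c_2: 2→3, d_1,d_2,d_3: 3→4, R_1,R_2: 4→1, R_3: 4→2, and potential S = R_3(d_3 c_1 − d_1 c_2) + R_1(d_1 b − d_2 c_1 a) + R_2(d_2 c_2 a − d_3 b), the potential S is good: every arrow appears in at least two terms of S and no path of length two appears in two distinct terms. -/

import Mathlib

/-- A quiver given by a vertex set, an arrow set and source/target maps. -/
structure Quiv where
  V : Type
  E : Type
  s : E → V
  t : E → V

namespace Quiv

/-- A path `a₁ a₂ ⋯ aₙ`, written with the composition-of-functions convention,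
is a list of arrows such that the source of each arrow is the target of the next one. -/
def IsPath (q : Quiv) : List q.E → Prop
  | [] => True
  | [_] => True
  | a :: b :: l => q.s a = q.t b ∧ IsPath q (b :: l)

variable (q : Quiv)

/-- The source of a (nonempty) path. -/
def pSrc (l : List q.E) : Option q.V := l.getLast?.map q.s

/-- The target of a (nonempty) path. -/
def pTgt (l : List q.E) : Option q.V := l.head?.map q.t

/-- A cycle is a nonempty path whose source equals its target. -/
def IsCycle (l : List q.E) : Prop := l ≠ [] ∧ q.IsPath l ∧ q.pSrc l = q.pTgt l

variable (K : Type) [Field K]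

open Classical in
/-- The cyclic derivative of a single cycle `a₁ ⋯ aₙ` with respect to an arrow `x`:
`∑ₖ δ(x, aₖ) • a_{k+1} ⋯ aₙ a₁ ⋯ a_{k-1}`, as an element of the vector space
spanned by paths. -/
noncomputable def cycDerList (x : q.E) (l : List q.E) : List q.E →₀ K :=
  ∑ k ∈ Finset.range l.length,
    if l[k]? = some x then Finsupp.single (l.drop (k + 1) ++ l.take k) 1 else 0

/-- The cyclic derivative of a potential (a linear combination of cycles)
with respect to an arrow `x`, extended linearly. -/
noncomputable def cycDer (x : q.E) (S : List q.E →₀ K) : List q.E →₀ K :=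
  S.sum fun l c => c • q.cycDerList K x l

/-- Two potentials are cyclically equivalent if their difference lies in the span of
the elements `a₁ ⋯ a_{n-1} aₙ - a₂ ⋯ aₙ a₁` for cycles `a₁ ⋯ aₙ`. -/
def CycEquiv (S S' : List q.E →₀ K) : Prop :=
  S - S' ∈ Submodule.span K
    {x : List q.E →₀ K | ∃ l : List q.E, q.IsCycle l ∧
      x = Finsupp.single l 1 - Finsupp.single (l.rotate 1) 1}


/-- The cyclically consecutive pairs of arrows of a cycle `a₁ ⋯ aₙ`:
`(a₁,a₂), …, (a_{n-1},aₙ), (aₙ,a₁)`; these record its subpaths of length two. -/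
def cycPairs (l : List q.E) : List (q.E × q.E) := l.zip (l.rotate 1)

open Classical in
/-- A potential `S` is good if it is a linear combination of cycles, each arrow of the quiver
appears at least twice among its terms, and no subpath of length two appears twice. -/
def Good (S : List q.E →₀ K) : Prop :=
  (∀ l ∈ S.support, q.IsCycle l) ∧
  (∀ e : q.E, 2 ≤ ∑ l ∈ S.support, l.count e) ∧
  (∀ p : q.E × q.E, (∑ l ∈ S.support, (q.cycPairs l).count p) ≤ 1)

end Quiv

/-- The arrows of the completed quiver of the local Calabi–Yau threefold over `dP1`:
`a : 1 → 2`, `b : 1 → 3`, `c₁ c₂ : 2 → 3`, `d₁ d₂ d₃ : 3 → 4`, `R₁ R₂ : 4 → 1`,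
`R₃ : 4 → 2`. -/
inductive DP1Arr : Type
  | a | b | c1 | c2 | d1 | d2 | d3 | R1 | R2 | R3
deriving DecidableEq

open DP1Arr in
/-- The completed `dP1` quiver, with vertices `1, 2, 3, 4` (encoded as `Fin 4`). -/
def dP1 : Quiv where
  V := Fin 4
  E := DP1Arr
  s := fun e => match e with
    | a => 0 | b => 0 | c1 => 1 | c2 => 1 | d1 => 2 | d2 => 2 | d3 => 2
    | R1 => 3 | R2 => 3 | R3 => 3
  t := fun e => match e with
    | a => 1 | b => 2 | c1 => 2 | c2 => 2 | d1 => 3 | d2 => 3 | d3 => 3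
    | R1 => 0 | R2 => 0 | R3 => 1

open DP1Arr in
/-- The potential `S = R₃(d₃c₁ − d₁c₂) + R₁(d₁b − d₂c₁a) + R₂(d₂c₂a − d₃b)` of the
completed `dP1` quiver, as a linear combination of cycles (written as lists of arrows in
the composition-of-functions convention). -/
noncomputable def dP1Pot (K : Type) [Field K] : List dP1.E →₀ K :=
  Finsupp.single [R3, d3, c1] 1 - Finsupp.single [R3, d1, c2] 1
    + Finsupp.single [R1, d1, b] 1 - Finsupp.single [R1, d2, c1, a] 1
    + Finsupp.single [R2, d2, c2, a] 1 - Finsupp.single [R2, d3, b] 1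

instance : DecidableEq dP1.E := (inferInstance : DecidableEq DP1Arr)
attribute [reducible] dP1

/-- A computable count function, used to replace `List.count` with classical `BEq`
instances by a kernel-reducible one. -/
def cnt {α : Type*} [DecidableEq α] (x : α) : List α → ℕ
  | [] => 0
  | y :: t => cnt x t + if x = y then 1 else 0

lemma count_eq_cnt {α : Type*} [DecidableEq α] (i : BEq α) [@LawfulBEq α i]
    (x : α) (l : List α) : @List.count α i x l = cnt x l := by
  induction l with
  | nil => rfl
  | cons y t ih =>
    rw [List.count_cons, ih, cnt]
    simp only [beq_iff_eq]
    by_cases hxy : x = y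
    · simp [hxy]
    · rw [if_neg hxy, if_neg (Ne.symm hxy)]

open DP1Arr in
lemma dP1Pot_support (K : Type) [Field K] :
    (dP1Pot K).support =
      ({[R3, d3, c1], [R3, d1, c2], [R1, d1, b], [R1, d2, c1, a],
       [R2, d2, c2, a], [R2, d3, b]} : Finset (List dP1.E)) := by
  ext l
  simp only [Finsupp.mem_support_iff, Finset.mem_insert, Finset.mem_singleton]
  constructor
  · intro h
    by_contra hc
    refine h ?_
    simp only [dP1Pot, Finsupp.add_apply, Finsupp.sub_apply,
      Finsupp.single_eq_of_ne'
        (show ([R3, d3, c1] : List dP1.E) ≠ l from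
          fun hh => hc (Or.inl hh.symm)),
      Finsupp.single_eq_of_ne'
        (show ([R3, d1, c2] : List dP1.E) ≠ l from
          fun hh => hc (Or.inr (Or.inl hh.symm))),
      Finsupp.single_eq_of_ne'
        (show ([R1, d1, b] : List dP1.E) ≠ l from
          fun hh => hc (Or.inr (Or.inr (Or.inl hh.symm)))),
      Finsupp.single_eq_of_ne'
        (show ([R1, d2, c1, a] : List dP1.E) ≠ l from
          fun hh => hc (Or.inr (Or.inr (Or.inr (Or.inl hh.symm))))),
      Finsupp.single_eq_of_ne'
        (show ([R2, d2, c2, a] : List dP1.E) ≠ l from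
          fun hh => hc (Or.inr (Or.inr (Or.inr (Or.inr (Or.inl hh.symm)))))),
      Finsupp.single_eq_of_ne'
        (show ([R2, d3, b] : List dP1.E) ≠ l from
          fun hh => hc (Or.inr (Or.inr (Or.inr (Or.inr (Or.inr hh.symm))))))]
    simp
  · rintro (rfl | rfl | rfl | rfl | rfl | rfl) <;>
      simp (config := { decide := true }) [dP1Pot, Finsupp.add_apply, Finsupp.sub_apply,
        Finsupp.single_eq_same, Finsupp.single_eq_of_ne]

/-- The potential `S = R₃(d₃c₁ − d₁c₂) + R₁(d₁b − d₂c₁a) + R₂(d₂c₂a − d₃b)`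
on the completed `dP1` quiver is good: every arrow appears in at least two terms of `S` and no
path of length two appears in two distinct terms. -/
theorem dP1_potential_is_good (K : Type) [Field K] :
    dP1.Good K (dP1Pot K) := by
  refine ⟨?_, ?_, ?_⟩
  · intro l hl
    rw [dP1Pot_support] at hl
    simp only [Finset.mem_insert, Finset.mem_singleton] at hl
    rcases hl with rfl | rfl | rfl | rfl | rfl | rfl <;>
      exact ⟨by simp, by simp [Quiv.IsPath, dP1], by rfl⟩
  · intro e
    rw [dP1Pot_support]
    simp only [count_eq_cnt]
    cases e <;> decide
  · rintro ⟨e1, e2⟩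
    rw [dP1Pot_support]
    simp only [count_eq_cnt]
    cases e1 <;> cases e2 <;> decide
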